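/- arXiv:2211.17262 — 10 statements merged into one kernel-verified Lean document; each statement's English description precedes it below -/
import Mathlib

section
/- Every ndao 𝒪 on a lattice L is consistent: for all x, y ∈ L with x ≤ y there exist w ∈ 𝒪ₗ(x,y) and z ∈ 𝒪ᵤ(x,y) such that w ≤ z. -/
/-- The Smyth order: `X ⪯ˢ Y` iff every `y ∈ Y` has some `x ∈ X` with `x ≤ y`. -/
def SmythLE {L : Type*} [Preorder L] (X Y : Set L) : Prop :=
  ∀ y ∈ Y, ∃ x ∈ X, x ≤ y

/-- The Hoare order: `X ⪯ᴴ Y` iff every `x ∈ X` has some `y ∈ Y` with `x ≤ y`. -/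
def HoareLE {L : Type*} [Preorder L] (X Y : Set L) : Prop :=
  ∀ x ∈ X, ∃ y ∈ Y, x ≤ y

/-- `(X₁, Y₁) ⪯ᴬᵢ (X₂, Y₂)` iff `X₁ ⪯ˢ X₂` and `Y₂ ⪯ᴴ Y₁`. -/
def AiLE {L : Type*} [Preorder L] (X₁ Y₁ X₂ Y₂ : Set L) : Prop :=
  SmythLE X₁ X₂ ∧ HoareLE Y₂ Y₁

/-- A non-deterministic approximation operator (ndao) on a lattice `L`. -/
structure NDAO (L : Type*) [Lattice L] where
  l : L → L → Set L
  u : L → L → Set L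
  l_nonempty : ∀ x y, (l x y).Nonempty
  u_nonempty : ∀ x y, (u x y).Nonempty
  mono : ∀ ⦃x₁ y₁ x₂ y₂ : L⦄, x₁ ≤ x₂ → y₂ ≤ y₁ →
    AiLE (l x₁ y₁) (u x₁ y₁) (l x₂ y₂) (u x₂ y₂)
  isExact : ∀ x, l x x = u x x

/-- Every ndao is consistent: consistent inputs yield a consistent pair
of a lower and an upper bound. -/
theorem ndao_consistent {L : Type*} [Lattice L] (O : NDAO L) :
    ∀ x y : L, x ≤ y → ∃ w ∈ O.l x y, ∃ z ∈ O.u x y, w ≤ z := by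
  intro x y hxy
  obtain ⟨hS, hH⟩ := O.mono hxy (le_refl y)
  obtain ⟨c, hc⟩ := O.l_nonempty y y
  obtain ⟨w, hw, hwc⟩ := hS c hc
  have hc' : c ∈ O.u y y := by rw [← O.isExact]; exact hc
  obtain ⟨z, hz, hcz⟩ := hH c hc'
  exact ⟨w, hw, z, hz, hwc.trans hcz⟩
end

section
/- Let 𝒪 be a symmetric ndao on a lattice L. Then for all x, y ∈ L with x ≤ y: 𝒪ₗ(x,y) ⪯ˢ 𝒪ᵤ(x,y) and 𝒪ₗ(x,y) ⪯ᴴ 𝒪ᵤ(x,y). -/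
/-- For a symmetric ndao (`𝒪ₗ(x,y) = 𝒪ᵤ(y,x)`), a stronger consistency holds:
for every `x ≤ y`, `𝒪ₗ(x,y) ⪯ˢ 𝒪ᵤ(x,y)` and `𝒪ₗ(x,y) ⪯ᴴ 𝒪ᵤ(x,y)`. -/
theorem symmetric_ndao_strong_consistency {L : Type*} [Lattice L] (O : NDAO L)
    (hsym : ∀ x y : L, O.l x y = O.u y x) :
    ∀ x y : L, x ≤ y →
      SmythLE (O.l x y) (O.u x y) ∧ HoareLE (O.l x y) (O.u x y) := by
  intro x y hxy
  have h := O.mono (x₁ := x) (y₁ := y) (x₂ := y) (y₂ := x) hxy hxy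
  rw [hsym y x, ← hsym x y] at h
  exact ⟨h.1, h.2⟩
end

section
/- Let L be a lattice and 𝒪 : L² → ℘(L) × ℘(L) an arbitrary operator (no monotonicity or exactness assumed), with components 𝒪ₗ, 𝒪ᵤ. Define, for X, Y ⊆ L, 𝒪'(X, Y) = (⋃_{x ∈ ↑X, y ∈ ↓Y} ↑𝒪ₗ(x,y), ⋃_{x ∈ ↑X, y ∈ ↓Y} ↓𝒪ᵤ(x,y)). Then 𝒪' is ⪯ᴬᵢ-monotonic: whenever (X, Y) ⪯ᴬᵢ (X', Y'), also 𝒪'(X, Y) ⪯ᴬᵢ 𝒪'(X', Y'). -/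
/-- The upward closure `↑X = {y | ∃ x ∈ X, x ≤ y}`. -/
def upClos {L : Type*} [Preorder L] (X : Set L) : Set L := {y | ∃ x ∈ X, x ≤ y}

/-- The downward closure `↓X = {y | ∃ x ∈ X, y ≤ x}`. -/
def downClos {L : Type*} [Preorder L] (X : Set L) : Set L := {y | ∃ x ∈ X, y ≤ x}

/-- Lower component of the derived state operator:
`⋃_{x ∈ ↑X, y ∈ ↓Y} ↑𝒪ₗ(x,y)`. -/
def stateL {L : Type*} [Preorder L] (Ol : L → L → Set L) (X Y : Set L) : Set L :=
  ⋃ x ∈ upClos X, ⋃ y ∈ downClos Y, upClos (Ol x y)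

/-- Upper component of the derived state operator:
`⋃_{x ∈ ↑X, y ∈ ↓Y} ↓𝒪ᵤ(x,y)`. -/
def stateU {L : Type*} [Preorder L] (Ou : L → L → Set L) (X Y : Set L) : Set L :=
  ⋃ x ∈ upClos X, ⋃ y ∈ downClos Y, downClos (Ou x y)

/-- The derived state operator of an arbitrary operator is `⪯ᴬᵢ`-monotonic. -/
theorem state_operator_aiMono {L : Type*} [Lattice L] (Ol Ou : L → L → Set L) :
    ∀ X Y X' Y' : Set L, AiLE X Y X' Y' →
      AiLE (stateL Ol X Y) (stateU Ou X Y) (stateL Ol X' Y') (stateU Ou X' Y') := by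
  intro X Y X' Y' ⟨hS, hH⟩
  have hup : upClos (L := L) X' ⊆ upClos X := by
    rintro x ⟨a, ha, hax⟩
    obtain ⟨b, hb, hba⟩ := hS a ha
    exact ⟨b, hb, le_trans hba hax⟩
  have hdn : downClos (L := L) Y' ⊆ downClos Y := by
    rintro y ⟨a, ha, hya⟩
    obtain ⟨b, hb, hab⟩ := hH a ha
    exact ⟨b, hb, le_trans hya hab⟩
  constructor
  · intro z hz
    refine ⟨z, ?_, le_refl z⟩
    simp only [stateL, Set.mem_iUnion] at hz ⊢
    obtain ⟨x, hx, y, hy, hzm⟩ := hz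
    exact ⟨x, hup hx, y, hdn hy, hzm⟩
  · intro z hz
    refine ⟨z, ?_, le_refl z⟩
    simp only [stateU, Set.mem_iUnion] at hz ⊢
    obtain ⟨x, hx, y, hy, hzm⟩ := hz
    exact ⟨x, hup hx, y, hdn hy, hzm⟩
end

section
/- Let L be a lattice and 𝒪' : ℘(L) × ℘(L) → ℘(L) × ℘(L) a ⪯ᴬᵢ-monotonic operator that is exact, i.e., for every x ∈ L there exists z ∈ 𝒪'ₗ({x}, {x}) ∩ 𝒪'ᵤ({x}, {x}). Then 𝒪' is consistent: for all x, y ∈ L with x ≤ y there exist w ∈ 𝒪'ₗ({x}, {y}) and z ∈ 𝒪'ᵤ({x}, {y}) with w ≤ z. -/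
/-- An exact `⪯ᴬᵢ`-monotonic state operator is consistent. -/
theorem exact_state_operator_consistent {L : Type*} [Lattice L]
    (Ol Ou : Set L → Set L → Set L)
    (hmono : ∀ X₁ Y₁ X₂ Y₂ : Set L, AiLE X₁ Y₁ X₂ Y₂ →
       AiLE (Ol X₁ Y₁) (Ou X₁ Y₁) (Ol X₂ Y₂) (Ou X₂ Y₂))
    (hexact : ∀ x : L, ∃ z : L, z ∈ Ol {x} {x} ∩ Ou {x} {x}) :
    ∀ x y : L, x ≤ y → ∃ w ∈ Ol {x} {y}, ∃ z ∈ Ou {x} {y}, w ≤ z := by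
  intro x y hxy
  obtain ⟨z, hzl, hzu⟩ := hexact x
  have h : AiLE ({x} : Set L) {y} {x} {x} := by
    constructor
    · intro a ha; exact ⟨a, ha, le_refl a⟩
    · intro a ha; rw [Set.mem_singleton_iff] at ha; exact ⟨y, rfl, ha ▸ hxy⟩
  obtain ⟨hS, hH⟩ := hmono _ _ _ _ h
  obtain ⟨w, hw, hwz⟩ := hS z hzl
  obtain ⟨z', hz', hzz'⟩ := hH z hzu
  exact ⟨w, hw, z', hz', hwz.trans hzz'⟩
end

section
/- Let L be a complete lattice and 𝒪 an ndao on L such that 𝒪ₗ(x,y) = {f(x,y)} and 𝒪ᵤ(x,y) = {g(x,y)} are singletons for all x, y ∈ L, and let (x^kk, y^kk) be the ≤ᵢ-least fixpoint of the deterministic approximation operator (x,y) ↦ (f(x,y), g(x,y)) on L². Let 𝒪' be the state operator derived from 𝒪. Then the ⪯ᴬᵢ-least fixpoint of 𝒪' (on pairs of an upward-closed and a downward-closed set) equals (↑{x^kk}, ↓{y^kk}). -/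
lemma mem_upClos_singleton {L : Type*} [Preorder L] {c z : L} :
    z ∈ upClos ({c} : Set L) ↔ c ≤ z := by
  constructor
  · rintro ⟨x, hx, hxz⟩; rw [Set.mem_singleton_iff] at hx; subst hx; exact hxz
  · intro h; exact ⟨c, rfl, h⟩

lemma mem_downClos_singleton {L : Type*} [Preorder L] {c z : L} :
    z ∈ downClos ({c} : Set L) ↔ z ≤ c := by
  constructor
  · rintro ⟨x, hx, hxz⟩; rw [Set.mem_singleton_iff] at hx; subst hx; exact hxz
  · intro h; exact ⟨c, rfl, h⟩

/-- For a singleton-valued (i.e. deterministic) ndao whose deterministic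
approximation operator has `≤ᵢ`-least fixpoint `(xkk, ykk)`, the `⪯ᴬᵢ`-least
fixpoint of the derived state operator is `(↑{xkk}, ↓{ykk})`. -/
theorem kripke_kleene_state_of_deterministic {L : Type*} [CompleteLattice L]
    (O : NDAO L) (f g : L → L → L)
    (hf : ∀ x y, O.l x y = {f x y}) (hg : ∀ x y, O.u x y = {g x y})
    (xkk ykk : L)
    (hfix : f xkk ykk = xkk ∧ g xkk ykk = ykk)
    (hleast : ∀ x y : L, f x y = x → g x y = y → xkk ≤ x ∧ y ≤ ykk) :
    stateL O.l (upClos {xkk}) (downClos {ykk}) = upClos {xkk} ∧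
    stateU O.u (upClos {xkk}) (downClos {ykk}) = downClos {ykk} ∧
    (∀ X Y : Set L, IsUpperSet X → IsLowerSet Y →
       stateL O.l X Y = X → stateU O.u X Y = Y →
       AiLE (upClos {xkk}) (downClos {ykk}) X Y) := by

  obtain ⟨hfx, hgy⟩ := hfix
  have fmono : ∀ ⦃x₁ y₁ x₂ y₂ : L⦄, x₁ ≤ x₂ → y₂ ≤ y₁ → f x₁ y₁ ≤ f x₂ y₂ := by
    intro x₁ y₁ x₂ y₂ hx hy
    have h := (O.mono hx hy).1
    rw [hf, hf] at h
    obtain ⟨w, hw, hle⟩ := h (f x₂ y₂) rfl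
    rw [Set.mem_singleton_iff] at hw; subst hw; exact hle
  have gmono : ∀ ⦃x₁ y₁ x₂ y₂ : L⦄, x₁ ≤ x₂ → y₂ ≤ y₁ → g x₂ y₂ ≤ g x₁ y₁ := by
    intro x₁ y₁ x₂ y₂ hx hy
    have h := (O.mono hx hy).2
    rw [hg, hg] at h
    obtain ⟨w, hw, hle⟩ := h (g x₂ y₂) rfl
    rw [Set.mem_singleton_iff] at hw; subst hw; exact hle
  refine ⟨?_, ?_, ?_⟩
  · ext z
    simp only [stateL, Set.mem_iUnion]
    constructor
    · rintro ⟨x, hx, y, hy, hz⟩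
      obtain ⟨x', hx', hx'x⟩ := hx
      rw [mem_upClos_singleton] at hx'
      obtain ⟨y', hy', hyy'⟩ := hy
      rw [mem_downClos_singleton] at hy'
      rw [hf, mem_upClos_singleton] at hz
      rw [mem_upClos_singleton]
      calc xkk = f xkk ykk := hfx.symm
        _ ≤ f x y := fmono (hx'.trans hx'x) (hyy'.trans hy')
        _ ≤ z := hz
    · intro hz
      refine ⟨xkk, ⟨xkk, mem_upClos_singleton.mpr le_rfl, le_rfl⟩,
        ykk, ⟨ykk, mem_downClos_singleton.mpr le_rfl, le_rfl⟩, ?_⟩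
      rw [hf, mem_upClos_singleton, hfx]
      exact mem_upClos_singleton.mp hz
  · ext z
    simp only [stateU, Set.mem_iUnion]
    constructor
    · rintro ⟨x, hx, y, hy, hz⟩
      obtain ⟨x', hx', hx'x⟩ := hx
      rw [mem_upClos_singleton] at hx'
      obtain ⟨y', hy', hyy'⟩ := hy
      rw [mem_downClos_singleton] at hy'
      rw [hg, mem_downClos_singleton] at hz
      rw [mem_downClos_singleton]
      calc z ≤ g x y := hz
        _ ≤ g xkk ykk := gmono (hx'.trans hx'x) (hyy'.trans hy')
        _ = ykk := hgy
    · intro hz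
      refine ⟨xkk, ⟨xkk, mem_upClos_singleton.mpr le_rfl, le_rfl⟩,
        ykk, ⟨ykk, mem_downClos_singleton.mpr le_rfl, le_rfl⟩, ?_⟩
      rw [hg, mem_downClos_singleton, hgy]
      exact mem_downClos_singleton.mp hz
  · intro X Y hXup hYlow hXfix hYfix
    set a := sInf X with ha
    set b := sSup Y with hb
    have hfab : f a b ≤ a := by
      apply le_sInf
      intro z hz
      rw [← hXfix] at hz
      simp only [stateL, Set.mem_iUnion] at hz
      obtain ⟨x, hx, y, hy, hz⟩ := hz
      rw [hf, mem_upClos_singleton] at hz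
      obtain ⟨x', hx', hx'x⟩ := hx
      obtain ⟨y', hy', hyy'⟩ := hy
      exact le_trans (fmono (le_trans (sInf_le hx') hx'x) (le_trans hyy' (le_sSup hy'))) hz
    have hgab : b ≤ g a b := by
      apply sSup_le
      intro z hz
      rw [← hYfix] at hz
      simp only [stateU, Set.mem_iUnion] at hz
      obtain ⟨x, hx, y, hy, hz⟩ := hz
      rw [hg, mem_downClos_singleton] at hz
      obtain ⟨x', hx', hx'x⟩ := hx
      obtain ⟨y', hy', hyy'⟩ := hy
      exact le_trans hz (gmono (le_trans (sInf_le hx') hx'x) (le_trans hyy' (le_sSup hy')))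
    let F : L × Lᵒᵈ →o L × Lᵒᵈ :=
      ⟨fun p => (f p.1 (OrderDual.ofDual p.2), OrderDual.toDual (g p.1 (OrderDual.ofDual p.2))),
       fun p q hpq => ⟨fmono hpq.1 hpq.2, gmono hpq.1 hpq.2⟩⟩
    set p := OrderHom.lfp F with hp
    have hpfix : F p = p := OrderHom.map_lfp F
    have hp1 : f p.1 (OrderDual.ofDual p.2) = p.1 := congrArg Prod.fst hpfix
    have hp2 : g p.1 (OrderDual.ofDual p.2) = OrderDual.ofDual p.2 :=
      congrArg (OrderDual.ofDual ∘ Prod.snd) hpfix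
    obtain ⟨hxkkp, hpykk⟩ := hleast _ _ hp1 hp2
    have hple : p ≤ (a, OrderDual.toDual b) := OrderHom.lfp_le F ⟨hfab, hgab⟩
    have hp1a : p.1 ≤ a := hple.1
    have hbp2 : b ≤ OrderDual.ofDual p.2 := hple.2
    constructor
    · intro z hz
      exact ⟨z, mem_upClos_singleton.mpr
        (hxkkp.trans (hp1a.trans (sInf_le hz))), le_rfl⟩
    · intro z hz
      exact ⟨z, mem_downClos_singleton.mpr
        (((le_sSup hz).trans hbp2).trans hpykk), le_rfl⟩
end

section
/- Let L be a lattice and O : L → ℘(L) a ⪯ˢ-monotonic non-deterministic operator (O(x) ≠ ∅ for all x, and x ≤ y implies O(x) ⪯ˢ O(y)). If w is a ≤-minimal pre-fixpoint of O (O(w) ⪯ˢ {w}, and there is no w' < w with O(w') ⪯ˢ {w'}), then w ∈ O(w) and w is a ≤-minimal fixpoint of O (there is no w' < w with w' ∈ O(w')). -/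
/-- A `≤`-minimal pre-fixpoint of a `⪯ˢ`-monotonic non-deterministic operator
is a `≤`-minimal fixpoint. -/
theorem minimal_prefixpoint_is_minimal_fixpoint {L : Type*} [Lattice L]
    (O : L → Set L)
    (hne : ∀ x : L, (O x).Nonempty)
    (hmono : ∀ x y : L, x ≤ y → SmythLE (O x) (O y))
    (w : L)
    (hpre : SmythLE (O w) {w})
    (hminpre : ¬ ∃ w' : L, w' < w ∧ SmythLE (O w') {w'}) :
    w ∈ O w ∧ ¬ ∃ w' : L, w' < w ∧ w' ∈ O w' := by
  obtain ⟨x, hxO, hxw⟩ := hpre w rfl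
  have hxpre : SmythLE (O x) {x} := by
    intro y hy
    cases hy
    exact hmono x w hxw x hxO
  have hxeq : x = w := by
    rcases lt_or_eq_of_le hxw with h | h
    · exact absurd ⟨x, h, hxpre⟩ hminpre
    · exact h
  constructor
  · exact hxeq ▸ hxO
  · rintro ⟨w', hw', hfix⟩
    exact hminpre ⟨w', hw', fun y hy => ⟨w', hfix, le_of_eq hy.symm⟩⟩
end

section
/- Let L be a complete lattice and O : L → ℘(L) a ⪯ˢ-monotonic, downward-closed non-deterministic operator. Then O admits a ≤-minimal fixpoint: there exists w ∈ L with w ∈ O(w) such that no w' < w satisfies w' ∈ O(w'). -/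
/-- A non-deterministic operator is downward closed if for every nonempty chain
of pre-fixpoints, the infimum of the chain is again a pre-fixpoint. -/
def DownwardClosed {L : Type*} [CompleteLattice L] (O : L → Set L) : Prop :=
  ∀ C : Set L, C.Nonempty → IsChain (· ≤ ·) C →
    (∀ w ∈ C, SmythLE (O w) {w}) → SmythLE (O (sInf C)) {sInf C}

/-- A `⪯ˢ`-monotonic, downward-closed non-deterministic operator on a complete
lattice admits a `≤`-minimal fixpoint. -/
theorem downward_closed_admits_minimal_fixpoint {L : Type*} [CompleteLattice L]
    (O : L → Set L)
    (hne : ∀ x : L, (O x).Nonempty)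
    (hmono : ∀ x y : L, x ≤ y → SmythLE (O x) (O y))
    (hdc : DownwardClosed O) :
    ∃ w : L, w ∈ O w ∧ ¬ ∃ w' : L, w' < w ∧ w' ∈ O w' := by
  -- The set of pre-fixpoints, viewed in the order dual so that Zorn gives a minimal element.
  set P : Set Lᵒᵈ := {w : Lᵒᵈ | SmythLE (O (OrderDual.ofDual w)) {OrderDual.ofDual w}} with hP
  have htop : (OrderDual.toDual (⊤ : L)) ∈ P := by
    intro y hy
    rcases hne ⊤ with ⟨x, hx⟩
    exact ⟨x, hx, by simp_all⟩
  obtain ⟨m, _, hmem, hmax⟩ := zorn_le_nonempty₀ P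
    (fun c hcP hc y hy => by
      -- c is a chain of pre-fixpoints in Lᵒᵈ; its sInf in L is an upper bound in Lᵒᵈ.
      have hC : IsChain (· ≤ ·) (OrderDual.ofDual '' c) := by
        rintro _ ⟨p, hp, rfl⟩ _ ⟨q, hq, rfl⟩ hpq
        rcases hc hp hq (fun h => hpq (congrArg OrderDual.ofDual h)) with h | h
        · exact Or.inr h
        · exact Or.inl h
      have hCne : (OrderDual.ofDual '' c).Nonempty := ⟨OrderDual.ofDual y, y, hy, rfl⟩
      have hpre : ∀ w ∈ OrderDual.ofDual '' c, SmythLE (O w) {w} := by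
        rintro _ ⟨p, hp, rfl⟩
        exact hcP hp
      have := hdc _ hCne hC hpre
      refine ⟨OrderDual.toDual (sInf (OrderDual.ofDual '' c)), this, ?_⟩
      intro z hz
      exact sInf_le ⟨z, hz, rfl⟩)
    (OrderDual.toDual ⊤) htop
  -- m (as an element of L) is a minimal pre-fixpoint.
  set w : L := OrderDual.ofDual m with hw
  have hwpre : SmythLE (O w) {w} := hmem
  -- minimality: any pre-fixpoint ≤ w equals w
  have hmin : ∀ z : L, SmythLE (O z) {z} → z ≤ w → z = w := by
    intro z hz hle
    have : w ≤ z := hmax (y := OrderDual.toDual z) hz hle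
    exact le_antisymm hle this
  -- get x ∈ O w with x ≤ w
  rcases hwpre w rfl with ⟨x, hxO, hxw⟩
  -- x is itself a pre-fixpoint
  have hxpre : SmythLE (O x) {x} := by
    intro y hy
    rcases hmono x w hxw x hxO with ⟨z, hz, hzx⟩
    exact ⟨z, hz, by rw [Set.mem_singleton_iff.mp hy]; exact hzx⟩
  have hx : x = w := hmin x hxpre hxw
  refine ⟨w, hx ▸ hxO, ?_⟩
  rintro ⟨w', hlt, hw'⟩
  have : w' = w := hmin w' (fun y hy => ⟨w', hw', le_of_eq (Set.mem_singleton_iff.mp hy).symm⟩) hlt.le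
  exact hlt.ne this
end

section
/- Let L be a finite complete lattice and 𝒪 an ndao on L. Then: (1) every stable fixpoint (x, y) of 𝒪 is a fixpoint of 𝒪, i.e., x ∈ 𝒪ₗ(x,y) and y ∈ 𝒪ᵤ(x,y); and (2) if for every y ∈ L the operator x ↦ 𝒪ₗ(x,y) is downward closed and for every y ∈ L the operator x ↦ 𝒪ᵤ(x,y) is ⪯ˢ-anti-monotonic (x₁ ≤ x₂ implies 𝒪ᵤ(x₂,y) ⪯ˢ 𝒪ᵤ(x₁,y)), then every stable fixpoint (x, y) of 𝒪 is a ≤ₜ-minimal fixpoint of 𝒪: there is no fixpoint (x', y') of 𝒪 with (x', y') ≤ₜ (x, y) and (x', y') ≠ (x, y). -/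
/-- The complete lower stable operator:
`C(𝒪ₗ)(y) = {x | x ∈ 𝒪ₗ(x,y), no x' < x with x' ∈ 𝒪ₗ(x',y)}`. -/
def Cl {L : Type*} [Lattice L] (O : NDAO L) (y : L) : Set L :=
  {x | x ∈ O.l x y ∧ ¬ ∃ x' : L, x' < x ∧ x' ∈ O.l x' y}

/-- The complete upper stable operator:
`C(𝒪ᵤ)(x) = {y | y ∈ 𝒪ᵤ(x,y), no y' < y with y' ∈ 𝒪ᵤ(x,y')}`. -/
def Cu {L : Type*} [Lattice L] (O : NDAO L) (x : L) : Set L :=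
  {y | y ∈ O.u x y ∧ ¬ ∃ y' : L, y' < y ∧ y' ∈ O.u x y'}

/-- On a finite complete lattice: (1) every stable fixpoint of an ndao is a
fixpoint; (2) if the lower component is downward closed and the upper component
is `⪯ˢ`-anti-monotonic in its first argument, every stable fixpoint is a
`≤ₜ`-minimal fixpoint. -/
theorem stable_fixpoints_are_minimal_fixpoints {L : Type*}
    [CompleteLattice L] [Finite L] (O : NDAO L) :
    (∀ x y : L, x ∈ Cl O y → y ∈ Cu O x → x ∈ O.l x y ∧ y ∈ O.u x y) ∧
    ((∀ y : L, DownwardClosed (fun x => O.l x y)) →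
     (∀ y x₁ x₂ : L, x₁ ≤ x₂ → SmythLE (O.u x₂ y) (O.u x₁ y)) →
     ∀ x y : L, x ∈ Cl O y → y ∈ Cu O x →
       ¬ ∃ x' y' : L, x' ∈ O.l x' y' ∧ y' ∈ O.u x' y' ∧
         x' ≤ x ∧ y' ≤ y ∧ (x', y') ≠ (x, y)) := by
  constructor
  · intro x y hx hy
    exact ⟨hx.1, hy.1⟩
  · intro _hdc _hanti x y hx hy
    rintro ⟨x', y', hl', hu', hxx, hyy, hne⟩
    -- x' is a prefixpoint of l · y
    have hpre : ∃ z ∈ O.l x' y, z ≤ x' := (O.mono (le_refl x') hyy).1 x' hl'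
    -- set of prefixpoints ≤ x'
    set S : Set L := {w | w ≤ x' ∧ ∃ z ∈ O.l w y, z ≤ w} with hS
    have hSne : x' ∈ S := ⟨le_refl x', hpre⟩
    obtain ⟨w, hwS, hwmin⟩ :=
      (wellFounded_lt (α := L)).has_min S ⟨x', hSne⟩
    obtain ⟨hwx', z, hz, hzw⟩ := hwS
    have hzS : z ∈ S := ⟨hzw.trans hwx', (O.mono hzw (le_refl y)).1 z hz⟩
    have hzw' : z = w := by
      by_contra hne'
      exact hwmin z hzS (lt_of_le_of_ne hzw hne')
    have hw : w ∈ O.l w y := hzw' ▸ hz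
    have hwx : w ≤ x := hwx'.trans hxx
    have hwex : w = x := by
      by_contra h
      exact hx.2 ⟨w, lt_of_le_of_ne hwx h, hw⟩
    have hxeq : x = x' := le_antisymm (hwex ▸ hwx') hxx
    have hy'ne : y' ≠ y := fun h => hne (by rw [hxeq, h])
    refine hy.2 ⟨y', lt_of_le_of_ne hyy hy'ne, ?_⟩
    rw [hxeq]; exact hu'
end

section
/- Let L be a finite complete lattice and 𝒪 an ndao on L such that 𝒪ₗ(x,y) = {f(x,y)} and 𝒪ᵤ(x,y) = {g(x,y)} are singletons for all x, y ∈ L. Then for all x, y ∈ L: C(𝒪ₗ)(y) = {lfp(x' ↦ f(x', y))} and C(𝒪ᵤ)(x) = {lfp(y' ↦ g(x, y'))}, where lfp denotes the least fixpoint of the respective ≤-monotone map on L. -/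
/-- For a singleton-valued ndao on a finite complete lattice, the complete
stable operators return the singleton consisting of the least fixpoint of the
corresponding component map. -/
theorem complete_stable_operator_deterministic {L : Type*}
    [CompleteLattice L] [Finite L] (O : NDAO L) (f g : L → L → L)
    (hf : ∀ x y, O.l x y = {f x y}) (hg : ∀ x y, O.u x y = {g x y}) :
    ∀ x y : L,
      (∃ a : L, IsLeast {x' : L | f x' y = x'} a ∧ Cl O y = {a}) ∧
      (∃ b : L, IsLeast {y' : L | g x y' = y'} b ∧ Cu O x = {b}) := by
  intro x y
  -- monotonicity of the component maps
  have hfmono : Monotone (fun x' => f x' y) := by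
    intro a b hab
    have h := (O.mono hab (le_refl y)).1
    rw [hf, hf] at h
    obtain ⟨c, hc, hle⟩ := h (f b y) rfl
    rw [Set.mem_singleton_iff] at hc
    exact hc.symm.trans_le hle
  have hgmono : Monotone (fun y' => g x y') := by
    intro a b hab
    have h := (O.mono (le_refl x) hab).2
    rw [hg, hg] at h
    obtain ⟨c, hc, hle⟩ := h (g x a) rfl
    rw [Set.mem_singleton_iff] at hc
    exact hle.trans_eq hc
  constructor
  · set F : L →o L := ⟨fun x' => f x' y, hfmono⟩
    refine ⟨OrderHom.lfp F, ⟨F.map_lfp, ?_⟩, ?_⟩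
    · intro c hc
      exact OrderHom.lfp_le F (le_of_eq hc)
    · ext z
      simp only [Cl, Set.mem_setOf_eq, hf, Set.mem_singleton_iff]
      constructor
      · rintro ⟨hz, hno⟩
        have h1 : OrderHom.lfp F ≤ z := OrderHom.lfp_le F (le_of_eq hz.symm)
        rcases lt_or_eq_of_le h1 with h | h
        · exact absurd ⟨OrderHom.lfp F, h, (F.map_lfp).symm⟩ hno
        · exact h.symm
      · rintro rfl
        refine ⟨(F.map_lfp).symm, ?_⟩
        rintro ⟨x', hx', hfx⟩
        exact absurd (OrderHom.lfp_le F (le_of_eq hfx.symm)) (not_le_of_gt hx')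
  · set G : L →o L := ⟨fun y' => g x y', hgmono⟩
    refine ⟨OrderHom.lfp G, ⟨G.map_lfp, ?_⟩, ?_⟩
    · intro c hc
      exact OrderHom.lfp_le G (le_of_eq hc)
    · ext z
      simp only [Cu, Set.mem_setOf_eq, hg, Set.mem_singleton_iff]
      constructor
      · rintro ⟨hz, hno⟩
        have h1 : OrderHom.lfp G ≤ z := OrderHom.lfp_le G (le_of_eq hz.symm)
        rcases lt_or_eq_of_le h1 with h | h
        · exact absurd ⟨OrderHom.lfp G, h, (G.map_lfp).symm⟩ hno
        · exact h.symm
      · rintro rfl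
        refine ⟨(G.map_lfp).symm, ?_⟩
        rintro ⟨y', hy', hgy⟩
        exact absurd (OrderHom.lfp_le G (le_of_eq hgy.symm)) (not_le_of_gt hy')
end

section
/- Let P be a disjunctive logic program over a finite set of atoms A, and let (x, y) be a consistent four-valued interpretation (x ⊆ y ⊆ A). Then (x, y) is a weakly supported model of P if and only if x ∈ ICˡ_P(x,y) and y ∈ ICᵘ_P(x,y). -/
/-- Propositional formulas over atoms of type `A`, built from `⊤`, `⊥`, atoms,
negation, conjunction and disjunction. -/
inductive Fmla (A : Type*) where
  | top : Fmla A
  | bot : Fmla A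
  | atom : A → Fmla A
  | neg : Fmla A → Fmla A
  | conj : Fmla A → Fmla A → Fmla A
  | disj : Fmla A → Fmla A → Fmla A

/-- Four-valued evaluation of a formula under the interpretation `(x, y)`.
Belnap's four values are encoded as pairs of propositions:
`T = (True, True)`, `C = (True, False)`, `U = (False, True)`,
`F = (False, False)`; the truth order `≤ₜ` is the componentwise order on
`Prop × Prop`, so `∧` is `⊓` (the `≤ₜ`-glb), `∨` is `⊔` (the `≤ₜ`-lub), and
negation swaps the two components negated (swapping `T` and `F` and fixing
`C` and `U`). -/
noncomputable def feval {A : Type*} (x y : Set A) : Fmla A → Prop × Prop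
  | .top => (True, True)
  | .bot => (False, False)
  | .atom a => (a ∈ x, a ∈ y)
  | .neg φ => (¬ (feval x y φ).2, ¬ (feval x y φ).1)
  | .conj φ ψ => feval x y φ ⊓ feval x y ψ
  | .disj φ ψ => feval x y φ ⊔ feval x y ψ

/-- A rule `⋁Δ ← φ` of a disjunctive logic program: a nonempty finite head of
atoms and a body formula. -/
structure Rule (A : Type*) where
  head : Finset A
  head_nonempty : head.Nonempty
  body : Fmla A

/-- The four-valued evaluation of the disjunction `⋁Δ` of a nonempty set of
atoms: the `≤ₜ`-least upper bound of the values of the atoms in `Δ`. -/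
def headEval {A : Type*} (Δ : Finset A) (x y : Set A) : Prop × Prop :=
  (∃ a ∈ Δ, a ∈ x, ∃ a ∈ Δ, a ∈ y)

/-- `(x, y)` is a (four-valued) model of the program `P`:
`(x,y)(⋁Δ) ≥ₜ (x,y)(φ)` for every rule `⋁Δ ← φ ∈ P`. -/
def IsModel {A : Type*} (P : Set (Rule A)) (x y : Set A) : Prop :=
  ∀ r ∈ P, feval x y r.body ≤ headEval r.head x y

/-- `(x, y)` is a weakly supported model of `P`: it is a model, and for every
`p ∈ y` there is a rule `⋁Δ ← φ ∈ P` with `p ∈ Δ` and `(x,y)(φ) ≥ₜ (x,y)(p)`. -/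
def WeaklySupported {A : Type*} (P : Set (Rule A)) (x y : Set A) : Prop :=
  IsModel P x y ∧
  ∀ p ∈ y, ∃ r ∈ P, p ∈ r.head ∧ feval x y (.atom p) ≤ feval x y r.body

/-- `HDˡ_P(x,y)`: heads of rules whose body evaluates to `T` or `C`. -/
def HDl {A : Type*} (P : Set (Rule A)) (x y : Set A) : Set (Finset A) :=
  {Δ | ∃ r ∈ P, r.head = Δ ∧ (feval x y r.body).1}

/-- `HDᵘ_P(x,y)`: heads of rules whose body evaluates to `T` or `U`. -/
def HDu {A : Type*} (P : Set (Rule A)) (x y : Set A) : Set (Finset A) :=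
  {Δ | ∃ r ∈ P, r.head = Δ ∧ (feval x y r.body).2}

/-- `ICˡ_P(x,y)`: sets of atoms contained in `⋃HDˡ_P(x,y)` that intersect
every head in `HDˡ_P(x,y)`. -/
def ICl {A : Type*} (P : Set (Rule A)) (x y : Set A) : Set (Set A) :=
  {x₁ | x₁ ⊆ {a | ∃ Δ ∈ HDl P x y, a ∈ Δ} ∧
        ∀ Δ ∈ HDl P x y, ∃ a ∈ Δ, a ∈ x₁}

/-- `ICᵘ_P(x,y)`: sets of atoms contained in `⋃HDᵘ_P(x,y)` that intersect
every head in `HDᵘ_P(x,y)`. -/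
def ICu {A : Type*} (P : Set (Rule A)) (x y : Set A) : Set (Set A) :=
  {y₁ | y₁ ⊆ {a | ∃ Δ ∈ HDu P x y, a ∈ Δ} ∧
        ∀ Δ ∈ HDu P x y, ∃ a ∈ Δ, a ∈ y₁}

lemma feval_mono {A : Type*} {x y : Set A} (hcons : x ⊆ y) :
    ∀ φ : Fmla A, (feval x y φ).1 → (feval x y φ).2 := by
  intro φ
  induction φ with
  | top => simp [feval]
  | bot => simp [feval]
  | atom a => exact fun h => hcons h
  | neg φ ih => exact fun h h2 => h (ih h2)
  | conj φ ψ ihφ ihψ =>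
      simp only [feval, Prod.fst_inf, Prod.snd_inf, inf_Prop_eq]
      exact fun ⟨h1, h2⟩ => ⟨ihφ h1, ihψ h2⟩
  | disj φ ψ ihφ ihψ =>
      simp only [feval, Prod.fst_sup, Prod.snd_sup, sup_Prop_eq]
      rintro (h | h)
      · exact Or.inl (ihφ h)
      · exact Or.inr (ihψ h)

/-- A consistent interpretation `(x, y)` is a weakly supported model of a
disjunctive logic program `P` over a finite set of atoms iff
`x ∈ ICˡ_P(x,y)` and `y ∈ ICᵘ_P(x,y)`. -/
theorem weakly_supported_iff_fixpoint_of_IC {A : Type*} [Fintype A]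
    (P : Set (Rule A)) (hP : P.Finite)
    (x y : Set A) (hcons : x ⊆ y) :
    WeaklySupported P x y ↔ (x ∈ ICl P x y ∧ y ∈ ICu P x y) := by
  constructor
  · rintro ⟨hmod, hsup⟩
    refine ⟨⟨?_, ?_⟩, ?_, ?_⟩
    · intro p hp
      obtain ⟨r, hrP, hph, hle⟩ := hsup p (hcons hp)
      refine ⟨r.head, ⟨r, hrP, rfl, ?_⟩, hph⟩
      exact hle.1 hp
    · rintro Δ ⟨r, hrP, rfl, hb⟩
      exact (hmod r hrP).1 hb
    · intro p hp
      obtain ⟨r, hrP, hph, hle⟩ := hsup p hp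
      refine ⟨r.head, ⟨r, hrP, rfl, ?_⟩, hph⟩
      exact hle.2 hp
    · rintro Δ ⟨r, hrP, rfl, hb⟩
      exact (hmod r hrP).2 hb
  · rintro ⟨⟨hxsub, hxint⟩, ⟨hysub, hyint⟩⟩
    constructor
    · intro r hrP
      constructor
      · intro hb
        exact hxint r.head ⟨r, hrP, rfl, hb⟩
      · intro hb
        exact hyint r.head ⟨r, hrP, rfl, hb⟩
    · intro p hp
      by_cases hpx : p ∈ x
      · obtain ⟨Δ, ⟨r, hrP, rfl, hb⟩, hpΔ⟩ := hxsub hpx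
        exact ⟨r, hrP, hpΔ, fun _ => hb, fun _ => feval_mono hcons r.body hb⟩
      · obtain ⟨Δ, ⟨r, hrP, rfl, hb⟩, hpΔ⟩ := hysub hp
        exact ⟨r, hrP, hpΔ, fun h => absurd h hpx, fun _ => hb⟩
end
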